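/- The misclassification error of the finite-dimensional Bayes-type classifier converges to that of the infinite-dimensional one: ℙ{Γ^{B,d}(X^(d,δ)) ≠ Y} − ℙ{Γ^B(X^(δ)) ≠ Y} → 0 as d → ∞. -/

import Mathlib

open MeasureTheory ProbabilityTheory Filter Metric TopologicalSpace Topology
open scoped ENNReal NNReal

noncomputable section

abbrev ell2 : Type := lp (fun _ : ℕ => ℝ) 2

noncomputable instance : MeasurableSpace ell2 := borel _
instance : BorelSpace ell2 := ⟨rfl⟩

-- coordinate evaluation is Lipschitz hence continuous
lemma ell2_coord_lipschitz (i : ℕ) : LipschitzWith 1 (fun x : ell2 => x i) := by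
  refine LipschitzWith.of_dist_le_mul fun f g => ?_
  have h := lp.norm_apply_le_norm (by norm_num : (2:ENNReal) ≠ 0) (f - g) i
  rw [lp.coeFn_sub] at h
  simpa [dist_eq_norm] using h

lemma ell2_coord_continuous (i : ℕ) : Continuous (fun x : ell2 => x i) :=
  (ell2_coord_lipschitz i).continuous

lemma ell2_proj_measurable (d : ℕ) :
    Measurable (fun x : ell2 => fun j : Fin d => x (j : ℕ)) :=
  measurable_pi_lambda _ fun j => (ell2_coord_continuous (j : ℕ)).measurable

/-- The cylinder σ-algebra on `ℓ₂`. -/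
def ell2CylSigma : MeasurableSpace ell2 :=
  ⨆ d : ℕ, MeasurableSpace.comap (fun x : ell2 => fun j : Fin d => x (j : ℕ)) inferInstance

lemma ell2_coord_measurable_cyl (i : ℕ) :
    Measurable[ell2CylSigma] (fun x : ell2 => x i) := by
  have h1 : Measurable[MeasurableSpace.comap
      (fun x : ell2 => fun j : Fin (i+1) => x (j : ℕ)) inferInstance]
      (fun x : ell2 => fun j : Fin (i+1) => x (j : ℕ)) :=
    measurable_iff_comap_le.mpr le_rfl
  have h2 := (measurable_pi_apply (⟨i, Nat.lt_succ_self i⟩ : Fin (i+1))).comp h1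
  exact h2.mono (le_iSup (fun d : ℕ => MeasurableSpace.comap
    (fun x : ell2 => fun j : Fin d => x (j : ℕ)) inferInstance) (i+1)) le_rfl

lemma ell2_sq_summand (x a : ell2) (i : ℕ) :
    ‖(x - a) i‖ ^ (2:ℝ≥0∞).toReal = ((x i : ℝ) - a i)^2 := by
  rw [lp.coeFn_sub]
  have : (2:ℝ≥0∞).toReal = ((2:ℕ):ℝ) := by norm_num
  rw [this, Real.rpow_natCast]
  simp [sq_abs]

lemma ell2_dist_eq_sqrt_tsum (x a : ell2) :
    dist x a = Real.sqrt (∑' i, ((x i : ℝ) - a i)^2) := by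
  have h := lp.norm_rpow_eq_tsum (p := 2) (E := fun _ : ℕ => ℝ) (by norm_num) (x - a)
  simp_rw [ell2_sq_summand x a] at h
  have h2 : ‖x - a‖ ^ (2:ℝ≥0∞).toReal = ‖x - a‖ ^ (2:ℕ) := by
    have : (2:ℝ≥0∞).toReal = ((2:ℕ):ℝ) := by norm_num
    rw [this, Real.rpow_natCast]
  rw [dist_eq_norm, ← h, h2, Real.sqrt_sq (norm_nonneg _)]

lemma ell2_dist_measurable_cyl (a : ell2) :
    Measurable[ell2CylSigma] (fun x : ell2 => dist x a) := by
  have hps : ∀ n : ℕ, Measurable[ell2CylSigma]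
      (fun x : ell2 => ∑ i ∈ Finset.range n, ((x i : ℝ) - a i)^2) := by
    intro n
    refine Finset.measurable_sum _ fun i _ => ?_
    exact ((ell2_coord_measurable_cyl i).sub_const (a i)).pow_const 2
  have hF : Measurable[ell2CylSigma] (fun x : ell2 => ∑' i, ((x i : ℝ) - a i)^2) := by
    refine @measurable_of_tendsto_metrizable' ell2 ℝ ell2CylSigma _ _ _ _ ℕ _ _ (atTop : Filter ℕ) _ _ hps ?_
    rw [tendsto_pi_nhds]
    intro x
    have hsum : Summable (fun i => ((x i : ℝ) - a i)^2) := by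
      have h1 : Summable (fun i => ‖(x - a) i‖ ^ (2:ℝ≥0∞).toReal) :=
        (lp.memℓp (x - a)).summable (by norm_num)
      exact (summable_congr (ell2_sq_summand x a)).mp h1
    exact hsum.hasSum.tendsto_sum_nat
  simp_rw [ell2_dist_eq_sqrt_tsum (a := a)]
  exact Real.continuous_sqrt.measurable.comp hF

instance : SeparableSpace ell2 := by
  rw [← isSeparable_univ_iff]
  have hS : IsSeparable (Submodule.span ℝ
      (Set.range (fun i : ℕ => lp.single 2 i (1:ℝ))) : Set ell2) :=
    (Set.countable_range _).isSeparable.span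
  refine (hS.closure).mono ?_
  intro x _
  have hsum : HasSum (fun i : ℕ => lp.single 2 i (x i : ℝ)) x :=
    lp.hasSum_single (by norm_num) x
  have hmem : ∀ n : ℕ, (∑ i ∈ Finset.range n, lp.single 2 i (x i : ℝ)) ∈
      Submodule.span ℝ (Set.range (fun i : ℕ => lp.single 2 i (1:ℝ))) := by
    intro n
    refine Submodule.sum_mem _ fun i _ => ?_
    have : (lp.single 2 i (x i : ℝ) : ell2) = (x i : ℝ) • (lp.single 2 i (1:ℝ) : ell2) := by
      rw [← lp.single_smul, smul_eq_mul, mul_one]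
    rw [this]
    exact Submodule.smul_mem _ _ (Submodule.subset_span ⟨i, rfl⟩)
  exact mem_closure_of_tendsto hsum.tendsto_sum_nat
    (Filter.Eventually.of_forall hmem)

theorem ell2_borel_eq_cyl : (borel ell2) = ell2CylSigma := by
  apply le_antisymm
  · -- borel ≤ cylinder σ-algebra, via balls with centers in a dense sequence
    haveI : SecondCountableTopology ell2 := UniformSpace.secondCountable_of_separable ell2
    have hbasis : IsTopologicalBasis
        {s : Set ell2 | ∃ (n : ℕ) (q : ℚ), 0 < q ∧ s = ball (denseSeq ell2 n) q} := by
      refine isTopologicalBasis_of_isOpen_of_nhds ?_ ?_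
      · rintro s ⟨n, q, -, rfl⟩; exact isOpen_ball
      · intro a u hau hu
        obtain ⟨r, hr, hball⟩ := Metric.isOpen_iff.mp hu a hau
        obtain ⟨n, hn⟩ := (denseRange_denseSeq ell2).exists_dist_lt a (by linarith : (0:ℝ) < r/4)
        obtain ⟨q, hq1, hq2⟩ := exists_rat_btwn (by linarith : r/4 < r/2)
        refine ⟨ball (denseSeq ell2 n) q, ⟨n, q, ?_, rfl⟩, ?_, ?_⟩
        · have : (0:ℝ) < q := lt_trans (by linarith) hq1
          exact_mod_cast this
        · rw [mem_ball]
          exact lt_trans hn hq1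
        · intro y hy
          have hn' : dist (denseSeq ell2 n) a < r/4 := by rwa [dist_comm]
          apply hball
          rw [mem_ball] at hy ⊢
          calc dist y a ≤ dist y (denseSeq ell2 n) + dist (denseSeq ell2 n) a :=
                dist_triangle _ _ _
            _ < q + r/4 := add_lt_add hy hn'
            _ < r := by
                have : (q:ℝ) < r/2 := hq2
                linarith
    rw [hbasis.borel_eq_generateFrom]
    refine MeasurableSpace.generateFrom_le ?_
    rintro s ⟨n, q, -, rfl⟩
    have : ball (denseSeq ell2 n) q =
        (fun x : ell2 => dist x (denseSeq ell2 n)) ⁻¹' (Set.Iio (q:ℝ)) := by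
      ext y; simp [mem_ball]
    rw [this]
    exact ell2_dist_measurable_cyl (denseSeq ell2 n) measurableSet_Iio
  · refine iSup_le fun d => ?_
    rw [← measurable_iff_comap_le]
    have : (borel ell2) = (inferInstance : MeasurableSpace ell2) := rfl
    rw [this]
    exact ell2_proj_measurable d

/-- The misclassification error of the finite-dimensional Bayes-type
classifier converges to that of the infinite-dimensional one:
`ℙ{Γ^{B,d}(X^(d,δ)) ≠ Y} − ℙ{Γ^B(X^(δ)) ≠ Y} → 0` as `d → ∞`. -/
theorem finite_dim_bayes_error_tendsto
    {Ω : Type} [MeasurableSpace Ω] (P : Measure Ω) [IsProbabilityMeasure P]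
    (M : ℕ) (hM : 1 ≤ M)
    (Y : Ω → ℝ) (hYmeas : Measurable Y) (hY01 : ∀ ω, Y ω = 0 ∨ Y ω = 1)
    (δ : Ω → Fin M) (hδ : Measurable δ)
    (X : Fin M → Ω → ell2) (hX : ∀ k, Measurable (X k))
    (φ : Fin M → Ω → ℝ)
    (hφ : ∀ k, φ k =
      P[(fun ω => (2 * Y ω - 1) * (if δ ω = k then (1:ℝ) else 0)) |
        MeasurableSpace.comap (X k) inferInstance])
    -- `φd d k` is the finite-dimensional conditional expectation given the first `d` coordinates
    (φd : ℕ → Fin M → Ω → ℝ)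
    (hφd : ∀ d k, φd d k =
      P[(fun ω => (2 * Y ω - 1) * (if δ ω = k then (1:ℝ) else 0)) |
        MeasurableSpace.comap (fun ω => fun j : Fin d => X k ω (j : ℕ)) inferInstance]) :
    Tendsto (fun d : ℕ =>
        (P {ω | (∑ k, (if δ ω = k then (1:ℝ) else 0) * (if 0 < φd d k ω then (1:ℝ) else 0)) ≠ Y ω}).toReal
          - (P {ω | (∑ k, (if δ ω = k then (1:ℝ) else 0) * (if 0 < φ k ω then (1:ℝ) else 0)) ≠ Y ω}).toReal)
      atTop (nhds 0) := by
  classical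
  -- the filtrations generated by the first `d` coordinates of `X k`
  set F : Fin M → Filtration ℕ ‹MeasurableSpace Ω› := fun k =>
    { seq := fun d => MeasurableSpace.comap (fun ω => fun j : Fin d => X k ω (j : ℕ)) inferInstance
      mono' := by
        intro d e hde
        rw [← measurable_iff_comap_le]
        exact (measurable_pi_lambda
            (fun (v : Fin e → ℝ) => fun j : Fin d => v (Fin.castLE hde j))
            (fun j => measurable_pi_apply (Fin.castLE hde j))).comp
          (measurable_iff_comap_le.mpr le_rfl)
      le' := fun d =>
        measurable_iff_comap_le.mp ((ell2_proj_measurable d).comp (hX k)) } with hF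
  have hFd : ∀ k d, F k d =
      MeasurableSpace.comap (fun ω => fun j : Fin d => X k ω (j : ℕ)) inferInstance :=
    fun k d => rfl
  -- the limit σ-algebra is the one generated by `X k`
  have hsup : ∀ k, (⨆ d, F k d) = MeasurableSpace.comap (X k) inferInstance := by
    intro k
    have h1 : ∀ d : ℕ, F k d = MeasurableSpace.comap (X k)
        (MeasurableSpace.comap (fun x : ell2 => fun j : Fin d => x (j : ℕ)) inferInstance) := by
      intro d
      rw [hFd, MeasurableSpace.comap_comp]
      rfl
    calc (⨆ d, F k d)
        = ⨆ d : ℕ, MeasurableSpace.comap (X k)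
          (MeasurableSpace.comap (fun x : ell2 => fun j : Fin d => x (j : ℕ)) inferInstance) := by
          exact iSup_congr h1
      _ = MeasurableSpace.comap (X k) ell2CylSigma := by
          rw [ell2CylSigma, MeasurableSpace.comap_iSup]
      _ = MeasurableSpace.comap (X k) inferInstance := by rw [← ell2_borel_eq_cyl]; rfl
  have hm : ∀ k, MeasurableSpace.comap (X k) inferInstance ≤ ‹MeasurableSpace Ω› :=
    fun k => measurable_iff_comap_le.mp (hX k)
  -- the target functions
  set Z : Fin M → Ω → ℝ := fun k ω => (2 * Y ω - 1) * (if δ ω = k then (1:ℝ) else 0) with hZ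
  have hδk : ∀ k : Fin M, MeasurableSet {ω | δ ω = k} := fun k =>
    hδ (measurableSet_singleton k)
  have hZmeas : ∀ k, Measurable (Z k) := fun k =>
    ((hYmeas.const_mul 2).sub_const 1).mul (Measurable.ite (hδk k) measurable_const
      measurable_const)
  have hZbdd : ∀ k ω, ‖Z k ω‖ ≤ 1 := by
    intro k ω
    rcases hY01 ω with h | h <;> by_cases hk : δ ω = k <;>
      simp [hZ, h, hk] <;> norm_num
  have hZint : ∀ k, Integrable (Z k) P := fun k =>
    (integrable_const (1:ℝ)).mono' (hZmeas k).aestronglyMeasurable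
      (ae_of_all _ (hZbdd k))
  -- measurability of φ and φd
  have hφsm : ∀ k, StronglyMeasurable[MeasurableSpace.comap (X k) inferInstance] (φ k) := by
    intro k; rw [hφ k]; exact stronglyMeasurable_condExp
  have hφm : ∀ k, Measurable (φ k) := fun k =>
    ((hφsm k).mono (hm k)).measurable
  have hφdsm : ∀ d k, StronglyMeasurable[F k d] (φd d k) := by
    intro d k; rw [hφd d k]; exact stronglyMeasurable_condExp
  have hφdm : ∀ d k, Measurable (φd d k) := fun d k =>
    ((hφdsm d k).mono ((F k).le d)).measurable
  have hφint : ∀ k, Integrable (φ k) P := by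
    intro k; rw [hφ k]; exact integrable_condExp
  have hφdint : ∀ d k, Integrable (φd d k) P := by
    intro d k; rw [hφd d k]; exact integrable_condExp
  -- the positivity sets
  have hA : ∀ k, MeasurableSet[MeasurableSpace.comap (X k) inferInstance] {ω | 0 < φ k ω} :=
    fun k => measurableSet_lt stronglyMeasurable_const.measurable (hφsm k).measurable
  have hB : ∀ d k, MeasurableSet[MeasurableSpace.comap (X k) inferInstance] {ω | 0 < φd d k ω} := by
    intro d k
    have h1 : MeasurableSet[F k d] {ω | 0 < φd d k ω} :=
      measurableSet_lt stronglyMeasurable_const.measurable (hφdsm d k).measurable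
    have h2 : F k d ≤ MeasurableSpace.comap (X k) inferInstance := by
      rw [← hsup k]; exact le_iSup (fun d => F k d) d
    exact h2 _ h1
  have hAm : ∀ k, MeasurableSet {ω | 0 < φ k ω} := fun k => hm k _ (hA k)
  have hBm : ∀ d k, MeasurableSet {ω | 0 < φd d k ω} := fun d k => hm k _ (hB d k)
  -- Levy's upward theorem, L¹ version
  have hlevy : ∀ k, Tendsto (fun d => eLpNorm (φd d k - φ k) 1 P) atTop (𝓝 0) := by
    intro k
    have h := tendsto_eLpNorm_condExp (μ := P) (ℱ := F k)
      (fun ω => (2 * Y ω - 1) * (if δ ω = k then (1:ℝ) else 0))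
    have heq : ∀ d : ℕ, (P[(fun ω => (2 * Y ω - 1) * (if δ ω = k then (1:ℝ) else 0)) | F k d])
        - (P[(fun ω => (2 * Y ω - 1) * (if δ ω = k then (1:ℝ) else 0)) | ⨆ d, F k d])
        = φd d k - φ k := by
      intro d
      rw [hsup k, ← hφ k, ← hφd d k]
    simpa only [heq] using h
  -- abbreviations
  set q : ℕ → Fin M → Ω → ℝ := fun d k ω =>
    (if 0 < φ k ω then (1:ℝ) else 0) - (if 0 < φd d k ω then (1:ℝ) else 0) with hq
  -- measurability of the error sets
  have hSdmeas : ∀ d : ℕ, MeasurableSet {ω | (∑ k, (if δ ω = k then (1:ℝ) else 0) *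
      (if 0 < φd d k ω then (1:ℝ) else 0)) ≠ Y ω} := by
    intro d
    have hf : Measurable (fun ω => ∑ k, (if δ ω = k then (1:ℝ) else 0) *
        (if 0 < φd d k ω then (1:ℝ) else 0)) :=
      Finset.measurable_sum _ fun k _ =>
        (Measurable.ite (hδk k) measurable_const measurable_const).mul
          (Measurable.ite (hBm d k) measurable_const measurable_const)
    exact (measurableSet_eq_fun hf hYmeas).compl
  have hSmeas : MeasurableSet {ω | (∑ k, (if δ ω = k then (1:ℝ) else 0) *
      (if 0 < φ k ω then (1:ℝ) else 0)) ≠ Y ω} := by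
    have hf : Measurable (fun ω => ∑ k, (if δ ω = k then (1:ℝ) else 0) *
        (if 0 < φ k ω then (1:ℝ) else 0)) :=
      Finset.measurable_sum _ fun k _ =>
        (Measurable.ite (hδk k) measurable_const measurable_const).mul
          (Measurable.ite (hAm k) measurable_const measurable_const)
    exact (measurableSet_eq_fun hf hYmeas).compl
  -- collapsing the sum over k
  have collapse : ∀ (ω : Ω) (c : Fin M → ℝ),
      (∑ k, (if δ ω = k then (1:ℝ) else 0) * c k) = c (δ ω) := by
    intro ω c
    rw [Finset.sum_congr rfl (fun k _ => by rw [ite_mul, one_mul, zero_mul])]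
    simp [Finset.sum_ite_eq]
  -- pointwise identity for the indicator difference
  have hpt : ∀ (d : ℕ) (ω : Ω),
      Set.indicator {ω | (∑ k, (if δ ω = k then (1:ℝ) else 0) *
          (if 0 < φd d k ω then (1:ℝ) else 0)) ≠ Y ω} (1 : Ω → ℝ) ω
        - Set.indicator {ω | (∑ k, (if δ ω = k then (1:ℝ) else 0) *
          (if 0 < φ k ω then (1:ℝ) else 0)) ≠ Y ω} (1 : Ω → ℝ) ω
      = ∑ k, q d k ω * Z k ω := by
    intro d ω
    have h1 : ∀ k : Fin M, q d k ω * Z k ω =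
        (if δ ω = k then (1:ℝ) else 0) * (q d k ω * (2 * Y ω - 1)) := by
      intro k; simp only [hZ, hq]; ring
    rw [Finset.sum_congr rfl (fun k _ => h1 k), collapse ω,
      Set.indicator_apply, Set.indicator_apply]
    simp only [Set.mem_setOf_eq, collapse ω, Pi.one_apply]
    rcases hY01 ω with h | h <;> rw [h] <;>
      by_cases h1 : 0 < φ (δ ω) ω <;> by_cases h2 : 0 < φd d (δ ω) ω <;>
        simp [hq, h1, h2] <;> norm_num
  -- integrability of q * Z
  have hqZint : ∀ d k, Integrable (fun ω => q d k ω * Z k ω) P := by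
    intro d k
    have hmeas : Measurable (fun ω => q d k ω * Z k ω) := by
      refine Measurable.mul ?_ (hZmeas k)
      exact ((Measurable.ite (hAm k) measurable_const measurable_const).sub
        (Measurable.ite (hBm d k) measurable_const measurable_const))
    refine (integrable_const (2:ℝ)).mono' hmeas.aestronglyMeasurable (ae_of_all _ fun ω => ?_)
    have h2 := hZbdd k ω
    have h3 : ‖q d k ω‖ ≤ 2 := by
      by_cases h1 : 0 < φ k ω <;> by_cases h4 : 0 < φd d k ω <;>
        simp [hq, h1, h4] <;> norm_num
    calc ‖q d k ω * Z k ω‖ = ‖q d k ω‖ * ‖Z k ω‖ := norm_mul _ _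
      _ ≤ 2 * 1 := mul_le_mul h3 h2 (norm_nonneg _) (by norm_num)
      _ = 2 := by norm_num
  -- the difference of misclassification errors as a sum of integrals
  have hrepr : ∀ d : ℕ,
      (P {ω | (∑ k, (if δ ω = k then (1:ℝ) else 0) *
          (if 0 < φd d k ω then (1:ℝ) else 0)) ≠ Y ω}).toReal
        - (P {ω | (∑ k, (if δ ω = k then (1:ℝ) else 0) *
          (if 0 < φ k ω then (1:ℝ) else 0)) ≠ Y ω}).toReal
      = ∑ k, ∫ ω, q d k ω * Z k ω ∂P := by
    intro d
    have hint1 : Integrable (Set.indicator {ω | (∑ k, (if δ ω = k then (1:ℝ) else 0) *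
        (if 0 < φd d k ω then (1:ℝ) else 0)) ≠ Y ω} (1 : Ω → ℝ)) P :=
      (integrable_const (1:ℝ)).indicator (hSdmeas d)
    have hint2 : Integrable (Set.indicator {ω | (∑ k, (if δ ω = k then (1:ℝ) else 0) *
        (if 0 < φ k ω then (1:ℝ) else 0)) ≠ Y ω} (1 : Ω → ℝ)) P :=
      (integrable_const (1:ℝ)).indicator hSmeas
    rw [← measureReal_def, ← measureReal_def, ← integral_indicator_one (hSdmeas d), ← integral_indicator_one hSmeas,
      ← integral_sub hint1 hint2,
      ← integral_finset_sum _ (fun k _ => hqZint d k)]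
    exact integral_congr_ae (ae_of_all _ fun ω => hpt d ω)
  -- replacing Z by its conditional expectation φ
  have hsplit : ∀ (d : ℕ) (k : Fin M) (g : Ω → ℝ), (fun ω => q d k ω * g ω) =
      (fun ω => Set.indicator {ω | 0 < φ k ω} g ω
        - Set.indicator {ω | 0 < φd d k ω} g ω) := by
    intro d k g; funext ω
    by_cases h1 : 0 < φ k ω <;> by_cases h2 : 0 < φd d k ω <;>
      simp [hq, Set.indicator_apply, h1, h2]
  have hQZ : ∀ (d : ℕ) (k : Fin M),
      ∫ ω, q d k ω * Z k ω ∂P = ∫ ω, q d k ω * φ k ω ∂P := by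
    intro d k
    have hset : ∀ (s : Set Ω), MeasurableSet[MeasurableSpace.comap (X k) inferInstance] s →
        ∫ ω in s, φ k ω ∂P = ∫ ω in s, Z k ω ∂P := by
      intro s hs
      conv_lhs => rw [hφ k]
      exact setIntegral_condExp (hm k) (hZint k) hs
    rw [hsplit d k (Z k), hsplit d k (φ k),
      integral_sub ((hZint k).indicator (hAm k)) ((hZint k).indicator (hBm d k)),
      integral_sub ((hφint k).indicator (hAm k)) ((hφint k).indicator (hBm d k)),
      integral_indicator (hAm k), integral_indicator (hBm d k),
      integral_indicator (hAm k), integral_indicator (hBm d k),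
      hset _ (hA k), hset _ (hB d k)]
  -- nonnegativity and the L¹ bound
  have ht_nonneg : ∀ d k, 0 ≤ ∫ ω, q d k ω * φ k ω ∂P := by
    intro d k
    refine integral_nonneg fun ω => ?_
    by_cases h1 : 0 < φ k ω <;> by_cases h2 : 0 < φd d k ω <;>
      simp [hq, h1, h2] <;>
      first
        | exact h1.le
        | exact not_lt.mp h1
        | linarith [not_lt.mp h1]
  have hqφint : ∀ d k, Integrable (fun ω => q d k ω * φ k ω) P := by
    intro d k
    rw [hsplit d k (φ k)]
    exact ((hφint k).indicator (hAm k)).sub ((hφint k).indicator (hBm d k))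
  have ht_le : ∀ d k, ∫ ω, q d k ω * φ k ω ∂P ≤ ∫ ω, |φd d k ω - φ k ω| ∂P := by
    intro d k
    refine integral_mono (hqφint d k) ((hφdint d k).sub (hφint k)).abs fun ω => ?_
    by_cases h1 : 0 < φ k ω <;> by_cases h2 : 0 < φd d k ω <;>
      simp [hq, h1, h2] <;>
      first
        | exact abs_nonneg _
        | linarith [neg_abs_le (φd d k ω - φ k ω), not_lt.mp h2]
        | linarith [le_abs_self (φd d k ω - φ k ω), h2]
  -- identification of the L¹ norm
  have habs : ∀ d k, ∫ ω, |φd d k ω - φ k ω| ∂P = (eLpNorm (φd d k - φ k) 1 P).toReal := by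
    intro d k
    have hint : Integrable (φd d k - φ k) P := (hφdint d k).sub (hφint k)
    rw [eLpNorm_one_eq_lintegral_enorm,
      ← integral_norm_eq_lintegral_enorm hint.aestronglyMeasurable]
    simp [Real.norm_eq_abs]
  -- assembling everything
  have hfd : ∀ d : ℕ,
      (P {ω | (∑ k, (if δ ω = k then (1:ℝ) else 0) *
          (if 0 < φd d k ω then (1:ℝ) else 0)) ≠ Y ω}).toReal
        - (P {ω | (∑ k, (if δ ω = k then (1:ℝ) else 0) *
          (if 0 < φ k ω then (1:ℝ) else 0)) ≠ Y ω}).toReal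
      = ∑ k, ∫ ω, q d k ω * φ k ω ∂P := by
    intro d
    rw [hrepr d]
    exact Finset.sum_congr rfl fun k _ => hQZ d k
  have hg0 : Tendsto (fun d => ∑ k, (eLpNorm (φd d k - φ k) 1 P).toReal) atTop (𝓝 0) := by
    have h1 : ∀ k : Fin M, Tendsto (fun d => (eLpNorm (φd d k - φ k) 1 P).toReal)
        atTop (𝓝 0) := by
      intro k
      have := (ENNReal.tendsto_toReal (by norm_num : (0:ℝ≥0∞) ≠ ⊤)).comp (hlevy k)
      simpa [Function.comp_def] using this
    have := tendsto_finset_sum (Finset.univ : Finset (Fin M))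
      (fun k _ => h1 k)
    simpa using this
  refine squeeze_zero (fun d => ?_) (fun d => ?_) hg0
  · rw [hfd d]
    exact Finset.sum_nonneg fun k _ => ht_nonneg d k
  · rw [hfd d]
    exact Finset.sum_le_sum fun k _ => (ht_le d k).trans (le_of_eq (habs d k))
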